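/- Let f₁, f₂ : [0,∞) → [0,∞) be bounded decreasing functions with f₁ ≥ f₂ pointwise and ∫₀^{t₀}(f₁(y) − f₂(y)) dy > 0 for some t₀ > 0. Let N be the renewal counting process of a zero-delayed random walk with positive i.i.d. increments. Then sup_{t ≥ t₀} [E ∫_{[0,t]} (f₁(t−y) − f₂(t−y)) dN(y)] / [∫₀^t (f₁(y) − f₂(y)) dy] < ∞. -/

import Mathlib

open MeasureTheory Filter
open scoped ENNReal

namespace RenewalAux

variable {Ω : Type*} [MeasurableSpace Ω]

/-- partial sums of the increments -/
noncomputable def S (ξ : ℕ → Ω → ℝ) (k : ℕ) (ω : Ω) : ℝ := ∑ i ∈ Finset.range k, ξ i ω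

lemma measurable_S {ξ : ℕ → Ω → ℝ} (hmeas : ∀ i, Measurable (ξ i)) (k : ℕ) :
    Measurable (S ξ k) :=
  Finset.measurable_sum _ fun i _ => hmeas i

omit [MeasurableSpace Ω] in
lemma filter_sum_eq (ξ : ℕ → Ω → ℝ) (m j : ℕ) (hj : j ≤ m) (ω : Ω) :
    (∑ i ∈ Finset.univ.filter (fun i : (Finset.range m : Finset ℕ) => (i : ℕ) < j),
      ξ (i : ℕ) ω) = S ξ j ω := by
  rw [Finset.univ_eq_attach, Finset.sum_filter,
    Finset.sum_attach (Finset.range m) (fun i => if i < j then ξ i ω else 0),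
    ← Finset.sum_filter]
  have h : (Finset.range m).filter (· < j) = Finset.range j := by
    ext i
    simp only [Finset.mem_filter, Finset.mem_range]
    omega
  rw [h, S]

open ProbabilityTheory in
lemma slice_bound {P : Measure Ω} [IsProbabilityMeasure P]
    {ξ : ℕ → Ω → ℝ} (hmeas : ∀ i, Measurable (ξ i))
    (hindep : iIndepFun ξ P)
    (hident : ∀ i, P.map (ξ i) = P.map (ξ 0))
    (hpos : ∀ i, ∀ᵐ ω ∂P, 0 < ξ i ω) :
    ∃ K : ℝ≥0∞, K < ⊤ ∧ ∀ b : ℝ,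
      (∑' k : ℕ, P {ω | b < S ξ k ω ∧ S ξ k ω ≤ b + 1}) ≤ K := by
  classical
  -- find δ with P {ξ₀ ≤ δ} < 1
  obtain ⟨δ, hδpos, hqlt⟩ : ∃ δ : ℝ, 0 < δ ∧ P {ω | ξ 0 ω ≤ δ} < 1 := by
    have h0 : P {ω | ξ 0 ω ≤ 0} = 0 := by
      have h := hpos 0
      rw [ae_iff] at h
      simpa only [not_lt] using h
    set A : ℕ → Set Ω := fun n => {ω | ξ 0 ω ≤ 1 / (n + 1)} with hA
    have hAm : ∀ n, MeasurableSet (A n) := fun n => hmeas 0 measurableSet_Iic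
    have hAanti : Antitone A := by
      intro a c hac ω hω
      have h1 : (1:ℝ)/((c:ℝ)+1) ≤ 1/((a:ℝ)+1) := by
        apply one_div_le_one_div_of_le (by positivity)
        have : (a:ℝ) ≤ c := by exact_mod_cast hac
        linarith
      exact le_trans hω h1
    have hInter : ⋂ n, A n = {ω | ξ 0 ω ≤ 0} := by
      ext ω
      simp only [Set.mem_iInter, hA, Set.mem_setOf_eq]
      constructor
      · intro h
        by_contra hc
        push_neg at hc
        obtain ⟨n, hn⟩ := exists_nat_one_div_lt hc
        exact absurd (h n) (not_le.mpr hn)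
      · intro h n
        have h2 : (0:ℝ) < 1/((n:ℝ)+1) := by positivity
        linarith
    have htend := tendsto_measure_iInter_atTop (μ := P)
      (fun n => (hAm n).nullMeasurableSet) hAanti ⟨0, measure_ne_top _ _⟩
    rw [hInter, h0] at htend
    obtain ⟨n, hn⟩ := (htend.eventually_lt_const (by norm_num : (0:ℝ≥0∞) < 1)).exists
    exact ⟨1/((n:ℝ)+1), by positivity, hn⟩
  set q := P {ω | ξ 0 ω ≤ δ} with hq_def
  have hqi : ∀ i, P {ω | ξ i ω ≤ δ} = q := by
    intro i
    have h1 : P.map (ξ i) (Set.Iic δ) = P.map (ξ 0) (Set.Iic δ) := by rw [hident i]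
    rwa [Measure.map_apply (hmeas i) measurableSet_Iic,
      Measure.map_apply (hmeas 0) measurableSet_Iic] at h1
  set L : ℕ := Nat.floor (1/δ) + 1 with hL_def
  have hL0 : 0 < L := Nat.succ_pos _
  haveI : NeZero L := ⟨hL0.ne'⟩
  have hLδ : 1 < (L : ℝ) * δ := by
    have h1 : 1/δ < (L : ℝ) := by
      have h2 := Nat.lt_floor_add_one (1/δ)
      rw [hL_def]
      push_cast
      linarith
    calc (1:ℝ) = (1/δ) * δ := by field_simp
    _ < L * δ := mul_lt_mul_of_pos_right h1 hδpos
  refine ⟨(L:ℝ≥0∞) * ((L:ℝ≥0∞) * (1 - q)⁻¹), ?_, ?_⟩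
  · have h1 : (1 - q)⁻¹ < ⊤ := by
      rw [ENNReal.inv_lt_top]
      exact tsub_pos_of_lt hqlt
    exact ENNReal.mul_lt_top (ENNReal.natCast_lt_top L)
      (ENNReal.mul_lt_top (ENNReal.natCast_lt_top L) h1)
  intro b
  -- a.s. positivity set
  set Ω₀ : Set Ω := ⋂ i, {ω | 0 < ξ i ω} with hΩ₀
  have hΩ₀c : P Ω₀ᶜ = 0 := by
    rw [hΩ₀, Set.compl_iInter]
    refine measure_iUnion_null fun i => ?_
    have h := hpos i
    rw [ae_iff] at h
    rw [Set.compl_setOf]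
    exact h
  set A : ℕ → Set Ω := fun m => {ω | ∀ j < m, S ξ j ω ≤ b} ∩ {ω | b < S ξ m ω} with hA_def
  have hAmeas : ∀ m, MeasurableSet (A m) := by
    intro m
    refine MeasurableSet.inter ?_ (measurableSet_lt measurable_const (measurable_S hmeas m))
    have h : {ω | ∀ j < m, S ξ j ω ≤ b} = ⋂ j ∈ Set.Iio m, {ω | S ξ j ω ≤ b} := by
      ext ω; simp
    rw [h]
    exact MeasurableSet.biInter (Set.to_countable _)
      (fun j _ => measurableSet_le (measurable_S hmeas j) measurable_const)
  have hAdisj : Pairwise (Function.onFun Disjoint A) := by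
    have key : ∀ a c, a < c → Disjoint (A a) (A c) := by
      intro a c h
      refine Set.disjoint_left.mpr ?_
      rintro ω ⟨_, h2⟩ ⟨h3, _⟩
      exact absurd (h3 a h) (not_le.mpr h2)
    intro a c hac
    rcases Nat.lt_or_ge a c with h | h
    · exact key a c h
    · exact (key c a (by omega)).symm
  -- key estimate
  have hkey : ∀ m k, m ≤ k →
      P ({ω | b < S ξ k ω ∧ S ξ k ω ≤ b + 1} ∩ A m)
        ≤ (L:ℝ≥0∞) * (P (A m) * q ^ ((k - m) / L)) := by
    intro m k hmk
    obtain ⟨w, hw⟩ : ∃ w, w = (k - m) / L := ⟨_, rfl⟩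
    rw [← hw]
    have hLw : L * w ≤ k - m := by
      rw [hw]
      calc L * ((k - m) / L) = ((k - m) / L) * L := mul_comm _ _
      _ ≤ k - m := Nat.div_mul_le_self _ _
    set block : ℕ → Finset ℕ := fun r => Finset.Ico (m + r * w) (m + r * w + w) with hblock
    have hmem : ∀ r i, i ∈ block r ↔ m + r * w ≤ i ∧ i < m + r * w + w := by
      intro r i
      rw [hblock]
      exact Finset.mem_Ico
    have hrw : ∀ r, r < L → r * w + w ≤ L * w := by
      intro r hr
      calc r * w + w = (r + 1) * w := by ring
      _ ≤ L * w := Nat.mul_le_mul_right _ (by omega)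
    have hblock_sub : ∀ r < L, block r ⊆ Finset.Ico m k := by
      intro r hr i hi
      rw [hmem] at hi
      rw [Finset.mem_Ico]
      have h1 := hrw r hr
      omega
    set B : ℕ → Set Ω := fun r => ⋂ i ∈ block r, {ω | ξ i ω ≤ δ} with hB
    have hincl : {ω | b < S ξ k ω ∧ S ξ k ω ≤ b + 1} ∩ A m ∩ Ω₀
        ⊆ ⋃ r ∈ Finset.range L, (A m ∩ B r) := by
      rintro ω ⟨⟨hE, hAm⟩, hΩm⟩
      by_contra hc
      have hsucc : ∀ r ∈ Finset.range L, ∃ i ∈ block r, δ < ξ i ω := by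
        intro r hr
        by_contra h
        push_neg at h
        exact hc (Set.mem_biUnion hr ⟨hAm, Set.mem_biInter fun i hi => h i hi⟩)
      have hposω : ∀ i, 0 < ξ i ω := fun i => Set.mem_iInter.mp hΩm i
      have hsum1 : ∑ i ∈ Finset.Ico m k, ξ i ω < 1 := by
        have hsub : ∑ i ∈ Finset.Ico m k, ξ i ω = S ξ k ω - S ξ m ω := by
          rw [S, S, Finset.sum_Ico_eq_sub _ hmk]
        rw [hsub]
        have h5 := hAm.2
        have h6 := hE.2
        simp only [Set.mem_setOf_eq] at h5
        linarith
      choose pick hpick hpickδ using fun r (hr : r ∈ Finset.range L) => hsucc r hr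
      have hdisjblock : ∀ r r', r < r' → ∀ i, i ∈ block r → i ∈ block r' → False := by
        intro r r' hrr' i hi hi'
        rw [hmem] at hi hi'
        have h7 : r * w + w ≤ r' * w := by
          calc r * w + w = (r + 1) * w := by ring
          _ ≤ r' * w := Nat.mul_le_mul_right _ (by omega)
        omega
      have h1 : ∑ i ∈ (Finset.range L).biUnion block, ξ i ω
          ≤ ∑ i ∈ Finset.Ico m k, ξ i ω := by
        apply Finset.sum_le_sum_of_subset_of_nonneg
        · intro i hi
          rw [Finset.mem_biUnion] at hi
          obtain ⟨r, hr, hir⟩ := hi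
          exact hblock_sub r (Finset.mem_range.mp hr) hir
        · intro i _ _
          exact (hposω i).le
      have h2 : ∑ i ∈ (Finset.range L).biUnion block, ξ i ω
          = ∑ r ∈ Finset.range L, ∑ i ∈ block r, ξ i ω := by
        apply Finset.sum_biUnion
        intro r hr r' hr' hne
        refine Finset.disjoint_left.mpr fun i hi hi' => ?_
        rcases Nat.lt_or_ge r r' with h | h
        · exact hdisjblock r r' h i hi hi'
        · exact hdisjblock r' r (by omega) i hi' hi
      have h3 : ∀ r ∈ Finset.range L, δ ≤ ∑ i ∈ block r, ξ i ω := by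
        intro r hr
        calc δ ≤ ξ (pick r hr) ω := (hpickδ r hr).le
        _ ≤ ∑ i ∈ block r, ξ i ω :=
          Finset.single_le_sum (fun i _ => (hposω i).le) (hpick r hr)
      have hge : (L:ℝ) * δ ≤ ∑ i ∈ Finset.Ico m k, ξ i ω := by
        calc (L:ℝ) * δ = ∑ _r ∈ Finset.range L, δ := by
              rw [Finset.sum_const, Finset.card_range, nsmul_eq_mul]
        _ ≤ ∑ r ∈ Finset.range L, ∑ i ∈ block r, ξ i ω := Finset.sum_le_sum h3
        _ = ∑ i ∈ (Finset.range L).biUnion block, ξ i ω := h2.symm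
        _ ≤ ∑ i ∈ Finset.Ico m k, ξ i ω := h1
      linarith
    have hPB : ∀ r, P (B r) = q ^ w := by
      intro r
      have hmb : ∀ i ∈ block r,
          MeasurableSet[MeasurableSpace.comap (ξ i) inferInstance] {ω | ξ i ω ≤ δ} :=
        fun i _ => ⟨Set.Iic δ, measurableSet_Iic, rfl⟩
      have h5 := hindep.meas_biInter (S := block r) (s := fun i => {ω | ξ i ω ≤ δ}) hmb
      rw [hB]
      rw [h5, Finset.prod_congr rfl (fun i _ => hqi i), Finset.prod_const]
      have hcard : (block r).card = w := by
        rw [hblock]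
        show (Finset.Ico (m + r * w) (m + r * w + w)).card = w
        rw [Nat.card_Ico]
        omega
      rw [hcard]
    have hfact : ∀ r, P (A m ∩ B r) = P (A m) * P (B r) := by
      intro r
      have hdisjST : Disjoint (Finset.range m) (block r) := by
        rw [Finset.disjoint_left]
        intro i hi hib
        rw [Finset.mem_range] at hi
        rw [hmem] at hib
        omega
      have hIF := hindep.indepFun_finset (Finset.range m) (block r) hdisjST hmeas
      set X : Ω → ({x // x ∈ Finset.range m} → ℝ) := fun ω i => ξ i ω with hX
      set Y : Ω → ({x // x ∈ block r} → ℝ) := fun ω i => ξ i ω with hY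
      set SA : Set ({x // x ∈ Finset.range m} → ℝ) :=
        {x | ∀ j < m, (∑ i ∈ Finset.univ.filter
            (fun i : (Finset.range m : Finset ℕ) => (i : ℕ) < j), x i) ≤ b}
          ∩ {x | b < ∑ i, x i} with hSA
      set SB : Set ({x // x ∈ block r} → ℝ) := {y | ∀ i, y i ≤ δ} with hSB
      have hSAm : MeasurableSet SA := by
        refine MeasurableSet.inter ?_ ?_
        · have h : {x : {x // x ∈ Finset.range m} → ℝ | ∀ j < m, (∑ i ∈ Finset.univ.filter
              (fun i : (Finset.range m : Finset ℕ) => (i : ℕ) < j), x i) ≤ b}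
            = ⋂ j ∈ Set.Iio m, {x : {x // x ∈ Finset.range m} → ℝ | (∑ i ∈ Finset.univ.filter
              (fun i : (Finset.range m : Finset ℕ) => (i : ℕ) < j), x i) ≤ b} := by
            ext x; simp
          rw [h]
          exact MeasurableSet.biInter (Set.to_countable _) fun j _ =>
            measurableSet_le (Finset.measurable_sum _ fun i _ => measurable_pi_apply i)
              measurable_const
        · exact measurableSet_lt measurable_const
            (Finset.measurable_sum _ fun i _ => measurable_pi_apply i)
      have hSBm : MeasurableSet SB := by
        have h : SB = ⋂ i, {y : {x // x ∈ block r} → ℝ | y i ≤ δ} := by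
          ext y; simp [hSB]
        rw [h]
        exact MeasurableSet.iInter fun i =>
          measurableSet_le (measurable_pi_apply i) measurable_const
      have hXA : X ⁻¹' SA = A m := by
        ext ω
        simp only [hSA, hX, Set.mem_preimage, Set.mem_inter_iff, Set.mem_setOf_eq, hA_def]
        constructor
        · rintro ⟨h1, h2⟩
          refine ⟨fun j hj => ?_, ?_⟩
          · have h3 := h1 j hj
            rwa [filter_sum_eq ξ m j hj.le ω] at h3
          · have h3 : (∑ i : (Finset.range m : Finset ℕ), ξ (i:ℕ) ω) = S ξ m ω := by
              rw [Finset.univ_eq_attach, Finset.sum_attach (Finset.range m) (fun i => ξ i ω), S]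
            rwa [h3] at h2
        · rintro ⟨h1, h2⟩
          refine ⟨fun j hj => ?_, ?_⟩
          · rw [filter_sum_eq ξ m j hj.le ω]; exact h1 j hj
          · rw [Finset.univ_eq_attach, Finset.sum_attach (Finset.range m) (fun i => ξ i ω)]
            exact h2
      have hYB : Y ⁻¹' SB = B r := by
        ext ω
        simp only [hSB, hY, Set.mem_preimage, Set.mem_setOf_eq, hB, Set.mem_iInter]
        constructor
        · intro h i hi; exact h ⟨i, hi⟩
        · intro h i; exact h i.1 i.2
      have h6 := hIF.measure_inter_preimage_eq_mul SA SB hSAm hSBm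
      rw [hXA, hYB] at h6
      exact h6
    have h4 : P ({ω | b < S ξ k ω ∧ S ξ k ω ≤ b + 1} ∩ A m)
        ≤ ∑ r ∈ Finset.range L, P (A m ∩ B r) := by
      calc P ({ω | b < S ξ k ω ∧ S ξ k ω ≤ b + 1} ∩ A m)
          ≤ P (({ω | b < S ξ k ω ∧ S ξ k ω ≤ b + 1} ∩ A m) ∩ Ω₀)
            + P (({ω | b < S ξ k ω ∧ S ξ k ω ≤ b + 1} ∩ A m) \ Ω₀) :=
            measure_le_inter_add_diff P _ Ω₀
      _ ≤ P (⋃ r ∈ Finset.range L, (A m ∩ B r)) + 0 := by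
          refine add_le_add (measure_mono hincl) (le_of_eq ?_)
          exact measure_mono_null (fun x hx => hx.2) hΩ₀c
      _ ≤ ∑ r ∈ Finset.range L, P (A m ∩ B r) := by
          rw [add_zero]; exact measure_biUnion_finset_le _ _
    calc P ({ω | b < S ξ k ω ∧ S ξ k ω ≤ b + 1} ∩ A m)
        ≤ ∑ r ∈ Finset.range L, P (A m ∩ B r) := h4
    _ = ∑ _r ∈ Finset.range L, P (A m) * q ^ w := by
        refine Finset.sum_congr rfl fun r _ => ?_
        rw [hfact r, hPB r]
    _ = (L:ℝ≥0∞) * (P (A m) * q ^ w) := by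
        rw [Finset.sum_const, Finset.card_range, nsmul_eq_mul]
  -- decomposition of slices and summation
  have hEk : ∀ k, P {ω | b < S ξ k ω ∧ S ξ k ω ≤ b + 1}
      ≤ ∑' m : ℕ, (if m ≤ k then (L:ℝ≥0∞) * (P (A m) * q ^ ((k - m) / L)) else 0) := by
    intro k
    have hsub : {ω | b < S ξ k ω ∧ S ξ k ω ≤ b + 1}
        ⊆ ⋃ m ∈ Finset.range (k+1), ({ω | b < S ξ k ω ∧ S ξ k ω ≤ b + 1} ∩ A m) := by
      intro ω hω
      have hex : ∃ j, b < S ξ j ω := ⟨k, hω.1⟩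
      have hm : Nat.find hex ≤ k := Nat.find_min' hex hω.1
      refine Set.mem_biUnion (Finset.mem_range.mpr (by omega)) ⟨hω, ?_, Nat.find_spec hex⟩
      intro j hj
      exact not_lt.mp (Nat.find_min hex hj)
    calc P {ω | b < S ξ k ω ∧ S ξ k ω ≤ b + 1}
        ≤ ∑ m ∈ Finset.range (k+1), P ({ω | b < S ξ k ω ∧ S ξ k ω ≤ b + 1} ∩ A m) :=
          le_trans (measure_mono hsub) (measure_biUnion_finset_le _ _)
    _ ≤ ∑ m ∈ Finset.range (k+1),
          (if m ≤ k then (L:ℝ≥0∞) * (P (A m) * q ^ ((k - m) / L)) else 0) := by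
        refine Finset.sum_le_sum fun m hm => ?_
        rw [Finset.mem_range] at hm
        rw [if_pos (by omega : m ≤ k)]
        exact hkey m k (by omega)
    _ ≤ _ := ENNReal.sum_le_tsum _
  have hinner : ∀ m, (∑' k : ℕ, if m ≤ k then (L:ℝ≥0∞) * (P (A m) * q ^ ((k - m) / L)) else 0)
      = (L:ℝ≥0∞) * P (A m) * ∑' n : ℕ, q ^ (n / L) := by
    intro m
    have hsupp : Function.support (fun k : ℕ =>
        (if m ≤ k then (L:ℝ≥0∞) * (P (A m) * q ^ ((k - m) / L)) else 0)) ⊆ {k | m ≤ k} := by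
      intro k hk
      by_contra h
      simp only [Set.mem_setOf_eq, not_le] at h
      exact hk (if_neg (by omega))
    rw [← tsum_subtype_eq_of_support_subset hsupp]
    let e : ℕ ≃ {k : ℕ // k ∈ {k | m ≤ k}} :=
      { toFun := fun n => ⟨m + n, Nat.le_add_right m n⟩
        invFun := fun k => k.1 - m
        left_inv := fun n => by show m + n - m = n; omega
        right_inv := fun k => Subtype.ext (by
          have hk2 : m ≤ k.1 := k.2
          show m + (k.1 - m) = k.1
          omega) }
    rw [← e.tsum_eq]
    refine Eq.trans (tsum_congr fun n => ?_) ENNReal.tsum_mul_left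
    show (if m ≤ m + n then (L:ℝ≥0∞) * (P (A m) * q ^ ((m + n - m) / L)) else 0)
      = (L:ℝ≥0∞) * P (A m) * q ^ (n / L)
    rw [if_pos (Nat.le_add_right m n)]
    have hmn : m + n - m = n := by omega
    rw [hmn, mul_assoc]
  have hgeo : (∑' n : ℕ, q ^ (n / L)) = (L:ℝ≥0∞) * (1 - q)⁻¹ := by
    have h1 := Equiv.tsum_eq (Nat.divModEquiv L).symm (fun a : ℕ => q ^ (a / L))
    rw [← h1]
    have h2 : ∀ p : ℕ × Fin L, q ^ (((Nat.divModEquiv L).symm p : ℕ) / L) = q ^ p.1 := by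
      intro p
      congr 1
      show (p.1 * L + (p.2 : ℕ)) / L = p.1
      rw [mul_comm, Nat.mul_add_div hL0, Nat.div_eq_of_lt p.2.isLt, add_zero]
    calc ∑' p : ℕ × Fin L, q ^ (((Nat.divModEquiv L).symm p : ℕ) / L)
        = ∑' p : ℕ × Fin L, q ^ p.1 := tsum_congr h2
    _ = ∑' (a : ℕ) (_r : Fin L), q ^ a := ENNReal.tsum_prod (f := fun a _ => q ^ a)
    _ = ∑' a : ℕ, (L:ℝ≥0∞) * q ^ a := by
        refine tsum_congr fun a => ?_
        rw [tsum_fintype, Finset.sum_const, Finset.card_univ, Fintype.card_fin, nsmul_eq_mul]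
    _ = (L:ℝ≥0∞) * ∑' a : ℕ, q ^ a := ENNReal.tsum_mul_left
    _ = (L:ℝ≥0∞) * (1 - q)⁻¹ := by rw [ENNReal.tsum_geometric]
  have hAsum : (∑' m : ℕ, P (A m)) ≤ 1 := by
    rw [← measure_iUnion hAdisj hAmeas]
    exact prob_le_one
  calc (∑' k : ℕ, P {ω | b < S ξ k ω ∧ S ξ k ω ≤ b + 1})
      ≤ ∑' (k : ℕ) (m : ℕ), (if m ≤ k then (L:ℝ≥0∞) * (P (A m) * q ^ ((k - m) / L)) else 0) :=
        ENNReal.tsum_le_tsum hEk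
  _ = ∑' (m : ℕ) (k : ℕ), (if m ≤ k then (L:ℝ≥0∞) * (P (A m) * q ^ ((k - m) / L)) else 0) :=
        ENNReal.tsum_comm
  _ = ∑' m : ℕ, (L:ℝ≥0∞) * P (A m) * ∑' n : ℕ, q ^ (n / L) := tsum_congr hinner
  _ = ((L:ℝ≥0∞) * ((L:ℝ≥0∞) * (1 - q)⁻¹)) * ∑' m : ℕ, P (A m) := by
      rw [← ENNReal.tsum_mul_left]
      refine tsum_congr fun m => ?_
      rw [hgeo]; ring
  _ ≤ ((L:ℝ≥0∞) * ((L:ℝ≥0∞) * (1 - q)⁻¹)) * 1 := mul_le_mul_right hAsum _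
  _ = (L:ℝ≥0∞) * ((L:ℝ≥0∞) * (1 - q)⁻¹) := mul_one _

lemma integrable_antitoneOn (f : ℝ → ℝ) (hf : AntitoneOn f (Set.Ici 0))
    (a b : ℝ) (ha : 0 ≤ a) (hb : 0 ≤ b) : IntervalIntegrable f MeasureTheory.volume a b := by
  apply AntitoneOn.intervalIntegrable
  apply hf.mono
  intro x hx
  rcases le_total a b with h | h
  · rw [Set.uIcc_of_le h] at hx; exact le_trans ha hx.1
  · rw [Set.uIcc_of_ge h] at hx; exact le_trans hb hx.1

lemma det_sum_bound (f₁ f₂ : ℝ → ℝ) (M : ℝ) (hM : ∀ y ≥ (0:ℝ), f₁ y ≤ M)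
    (h₁ : AntitoneOn f₁ (Set.Ici 0)) (h₂ : AntitoneOn f₂ (Set.Ici 0))
    (hle : ∀ y ≥ (0:ℝ), f₂ y ≤ f₁ y) (h₂pos : ∀ y ≥ (0:ℝ), 0 ≤ f₂ y)
    (t : ℝ) (ht : 0 ≤ t) :
    (∑ j ∈ Finset.range (Nat.floor t + 1), (f₁ (j:ℝ) - f₂ ((j:ℝ)+1)))
      ≤ 2*M + ∫ y in (0:ℝ)..t, (f₁ y - f₂ y) := by
  have hM0 : 0 ≤ M := le_trans (le_trans (h₂pos 0 le_rfl) (hle 0 le_rfl)) (hM 0 le_rfl)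
  set n := Nat.floor t with hn_def
  have hn : (n:ℝ) ≤ t := Nat.floor_le ht
  -- splitting the sum
  have hsplit : (∑ j ∈ Finset.range (n+1), (f₁ (j:ℝ) - f₂ ((j:ℝ)+1)))
      = (f₁ 0 - f₂ ((n:ℝ)+1)) + ∑ j ∈ Finset.range n, (f₁ ((j:ℝ)+1) - f₂ ((j:ℝ)+1)) := by
    rw [Finset.sum_sub_distrib, Finset.sum_range_succ', Finset.sum_range_succ,
      Finset.sum_sub_distrib]
    push_cast
    ring
  -- per-term integral comparison
  have hB : ∀ j ∈ Finset.range n, f₁ ((j:ℝ)+1) - f₂ ((j:ℝ)+1)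
      ≤ (∫ y in (j:ℝ)..((j:ℝ)+1), f₁ y) - ∫ y in ((j:ℝ)+1)..((j:ℝ)+1+1), f₂ y := by
    intro j _
    have hj0 : (0:ℝ) ≤ j := Nat.cast_nonneg j
    have e1 : f₁ ((j:ℝ)+1) ≤ ∫ y in (j:ℝ)..((j:ℝ)+1), f₁ y := by
      have hconst : (∫ _y in (j:ℝ)..((j:ℝ)+1), f₁ ((j:ℝ)+1)) = f₁ ((j:ℝ)+1) := by
        rw [intervalIntegral.integral_const]; simp
      rw [← hconst]
      apply intervalIntegral.integral_mono_on (by linarith) intervalIntegrable_const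
        (integrable_antitoneOn f₁ h₁ _ _ hj0 (by linarith))
      intro x hx
      exact h₁ (Set.mem_Ici.mpr (le_trans hj0 hx.1)) (Set.mem_Ici.mpr (by linarith)) hx.2
    have e2 : (∫ y in ((j:ℝ)+1)..((j:ℝ)+1+1), f₂ y) ≤ f₂ ((j:ℝ)+1) := by
      have hconst : (∫ _y in ((j:ℝ)+1)..((j:ℝ)+1+1), f₂ ((j:ℝ)+1)) = f₂ ((j:ℝ)+1) := by
        rw [intervalIntegral.integral_const]; simp
      rw [← hconst]
      apply intervalIntegral.integral_mono_on (by linarith)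
        (integrable_antitoneOn f₂ h₂ _ _ (by linarith) (by linarith)) intervalIntegrable_const
      intro x hx
      exact h₂ (Set.mem_Ici.mpr (by linarith)) (Set.mem_Ici.mpr (le_trans (by linarith) hx.1))
        hx.1
    linarith
  -- telescoping
  have hC1 : (∑ j ∈ Finset.range n, ∫ y in (j:ℝ)..((j:ℝ)+1), f₁ y)
      = ∫ y in (0:ℝ)..(n:ℝ), f₁ y := by
    have h := intervalIntegral.sum_integral_adjacent_intervals (a := fun k : ℕ => (k:ℝ)) (n := n)
      (fun k _ => integrable_antitoneOn f₁ h₁ _ _ (Nat.cast_nonneg k) (Nat.cast_nonneg (k+1)))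
    simp only [Nat.cast_zero, Nat.cast_add, Nat.cast_one] at h
    exact h
  have hC2 : (∑ j ∈ Finset.range n, ∫ y in ((j:ℝ)+1)..((j:ℝ)+1+1), f₂ y)
      = ∫ y in (1:ℝ)..((n:ℝ)+1), f₂ y := by
    have h := intervalIntegral.sum_integral_adjacent_intervals
      (a := fun k : ℕ => (k:ℝ)+1) (n := n)
      (fun k _ => integrable_antitoneOn f₂ h₂ _ _ (by positivity) (by positivity))
    simp only [Nat.cast_zero, Nat.cast_add, Nat.cast_one, zero_add] at h
    exact h
  have hT : (∑ j ∈ Finset.range n, (f₁ ((j:ℝ)+1) - f₂ ((j:ℝ)+1)))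
      ≤ (∫ y in (0:ℝ)..(n:ℝ), f₁ y) - ∫ y in (1:ℝ)..((n:ℝ)+1), f₂ y := by
    calc (∑ j ∈ Finset.range n, (f₁ ((j:ℝ)+1) - f₂ ((j:ℝ)+1)))
        ≤ ∑ j ∈ Finset.range n,
            ((∫ y in (j:ℝ)..((j:ℝ)+1), f₁ y) - ∫ y in ((j:ℝ)+1)..((j:ℝ)+1+1), f₂ y) :=
          Finset.sum_le_sum hB
    _ = (∑ j ∈ Finset.range n, ∫ y in (j:ℝ)..((j:ℝ)+1), f₁ y)
          - ∑ j ∈ Finset.range n, ∫ y in ((j:ℝ)+1)..((j:ℝ)+1+1), f₂ y :=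
          Finset.sum_sub_distrib _ _
    _ = _ := by rw [hC1, hC2]
  -- integral rearrangement
  have i01 : IntervalIntegrable f₂ MeasureTheory.volume 0 1 :=
    integrable_antitoneOn f₂ h₂ _ _ le_rfl zero_le_one
  have i1n : IntervalIntegrable f₂ MeasureTheory.volume 1 ((n:ℝ)+1) :=
    integrable_antitoneOn f₂ h₂ _ _ zero_le_one (by positivity)
  have i0n : IntervalIntegrable f₂ MeasureTheory.volume 0 (n:ℝ) :=
    integrable_antitoneOn f₂ h₂ _ _ le_rfl (Nat.cast_nonneg n)
  have innp : IntervalIntegrable f₂ MeasureTheory.volume (n:ℝ) ((n:ℝ)+1) :=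
    integrable_antitoneOn f₂ h₂ _ _ (Nat.cast_nonneg n) (by positivity)
  have hdec : (∫ y in (0:ℝ)..1, f₂ y) + (∫ y in (1:ℝ)..((n:ℝ)+1), f₂ y)
      = (∫ y in (0:ℝ)..(n:ℝ), f₂ y) + ∫ y in (n:ℝ)..((n:ℝ)+1), f₂ y := by
    rw [intervalIntegral.integral_add_adjacent_intervals i01 i1n,
      intervalIntegral.integral_add_adjacent_intervals i0n innp]
  have hf2n : 0 ≤ ∫ y in (n:ℝ)..((n:ℝ)+1), f₂ y :=
    intervalIntegral.integral_nonneg (by linarith)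
      (fun u hu => h₂pos u (le_trans (Nat.cast_nonneg n) hu.1))
  have hf01 : (∫ y in (0:ℝ)..1, f₂ y) ≤ M := by
    have hconst : (∫ _y in (0:ℝ)..1, M) = M := by
      rw [intervalIntegral.integral_const]; simp
    rw [← hconst]
    apply intervalIntegral.integral_mono_on zero_le_one i01 intervalIntegrable_const
    intro x hx
    exact le_trans (hle x hx.1) (hM x hx.1)
  have hsub : (∫ y in (0:ℝ)..(n:ℝ), f₁ y) - (∫ y in (0:ℝ)..(n:ℝ), f₂ y)
      = ∫ y in (0:ℝ)..(n:ℝ), (f₁ y - f₂ y) :=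
    (intervalIntegral.integral_sub
      (integrable_antitoneOn f₁ h₁ _ _ le_rfl (Nat.cast_nonneg n)) i0n).symm
  have hgmono : (∫ y in (0:ℝ)..(n:ℝ), (f₁ y - f₂ y)) ≤ ∫ y in (0:ℝ)..t, (f₁ y - f₂ y) := by
    have hadd := intervalIntegral.integral_add_adjacent_intervals
      (f := fun y => f₁ y - f₂ y) (μ := MeasureTheory.volume) (a := 0) (b := (n:ℝ)) (c := t)
      ((integrable_antitoneOn f₁ h₁ _ _ le_rfl (Nat.cast_nonneg n)).sub i0n)
      ((integrable_antitoneOn f₁ h₁ _ _ (Nat.cast_nonneg n) ht).sub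
        (integrable_antitoneOn f₂ h₂ _ _ (Nat.cast_nonneg n) ht))
    have hpo : 0 ≤ ∫ y in (n:ℝ)..t, (f₁ y - f₂ y) :=
      intervalIntegral.integral_nonneg hn
        (fun u hu => sub_nonneg.mpr (hle u (le_trans (Nat.cast_nonneg n) hu.1)))
    linarith
  have h00 : f₁ 0 - f₂ ((n:ℝ)+1) ≤ M := by
    have e3 := hM 0 le_rfl
    have e4 := h₂pos ((n:ℝ)+1) (by positivity)
    linarith
  linarith

end RenewalAux

/-- for a renewal process with i.i.d. strictly positive increments and
bounded decreasing `f₁ ≥ f₂ ≥ 0` with `∫₀^{t₀}(f₁−f₂) > 0`, the ratio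
`E ∫_{[0,t]}(f₁(t−y)−f₂(t−y)) dN(y) / ∫₀ᵗ(f₁−f₂)` is bounded over `t ≥ t₀`. -/
theorem renewal_shot_noise_ratio_bounded
    {Ω : Type*} [MeasurableSpace Ω] (P : Measure Ω) [IsProbabilityMeasure P]
    (ξ : ℕ → Ω → ℝ) (hmeas : ∀ i, Measurable (ξ i))
    (hindep : ProbabilityTheory.iIndepFun ξ P)
    (hident : ∀ i, P.map (ξ i) = P.map (ξ 0))
    (hpos : ∀ i, ∀ᵐ ω ∂P, 0 < ξ i ω)
    (f₁ f₂ : ℝ → ℝ)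
    (hbdd : ∃ M, ∀ y ≥ (0:ℝ), f₁ y ≤ M)
    (h₁ : AntitoneOn f₁ (Set.Ici 0)) (h₂ : AntitoneOn f₂ (Set.Ici 0))
    (hle : ∀ y ≥ (0:ℝ), f₂ y ≤ f₁ y) (h₂pos : ∀ y ≥ (0:ℝ), 0 ≤ f₂ y)
    (t₀ : ℝ) (ht₀ : 0 < t₀)
    (hpos_int : 0 < ∫ y in (0:ℝ)..t₀, (f₁ y - f₂ y)) :
    ∃ C : ℝ≥0∞, C < ⊤ ∧ ∀ t ≥ t₀,
      (∫⁻ ω, ∑' k : ℕ,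
          (if (∑ i ∈ Finset.range k, ξ i ω) ≤ t then
            ENNReal.ofReal (f₁ (t - ∑ i ∈ Finset.range k, ξ i ω) -
              f₂ (t - ∑ i ∈ Finset.range k, ξ i ω)) else 0) ∂P)
        ≤ C * ENNReal.ofReal (∫ y in (0:ℝ)..t, (f₁ y - f₂ y)) := by
  classical
  obtain ⟨M, hM⟩ := hbdd
  obtain ⟨K, hKlt, hK⟩ := RenewalAux.slice_bound hmeas hindep hident hpos
  have hM0 : 0 ≤ M := le_trans (le_trans (h₂pos 0 le_rfl) (hle 0 le_rfl)) (hM 0 le_rfl)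
  set c₀ : ℝ := ∫ y in (0:ℝ)..t₀, (f₁ y - f₂ y) with hc₀
  have hc₀pos : 0 < c₀ := hpos_int
  refine ⟨K * ENNReal.ofReal (2*M/c₀ + 1), ENNReal.mul_lt_top hKlt ENNReal.ofReal_lt_top, ?_⟩
  intro t ht
  have ht0 : (0:ℝ) ≤ t := le_trans ht₀.le ht
  have hΩ₀ : ∀ᵐ ω ∂P, ∀ i, 0 < ξ i ω := ae_all_iff.mpr hpos
  set G : ℝ → ℝ≥0∞ := fun s =>
    if s ≤ t then ENNReal.ofReal (f₁ (max (t - s) 0) - f₂ (max (t - s) 0)) else 0 with hG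
  have hGmeas : Measurable G := by
    have hant : ∀ (f : ℝ → ℝ), AntitoneOn f (Set.Ici 0) →
        Measurable (fun s : ℝ => f (max (t - s) 0)) := by
      intro f hf
      have hmono : Monotone (fun s : ℝ => f (max (t - s) 0)) := by
        intro a a' haa'
        have h1 : max (t - a') 0 ≤ max (t - a) 0 := max_le_max (by linarith) le_rfl
        exact hf (Set.mem_Ici.mpr (le_max_right _ _)) (Set.mem_Ici.mpr (le_max_right _ _)) h1
      exact hmono.measurable
    refine Measurable.ite measurableSet_Iic ?_ measurable_const
    exact ((hant f₁ h₁).sub (hant f₂ h₂)).ennreal_ofReal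
  have hcongr : (∫⁻ ω, ∑' k : ℕ,
      (if (∑ i ∈ Finset.range k, ξ i ω) ≤ t then
        ENNReal.ofReal (f₁ (t - ∑ i ∈ Finset.range k, ξ i ω) -
          f₂ (t - ∑ i ∈ Finset.range k, ξ i ω)) else 0) ∂P)
      = ∫⁻ ω, ∑' k : ℕ, G (RenewalAux.S ξ k ω) ∂P := by
    refine lintegral_congr_ae ?_
    filter_upwards [hΩ₀] with ω hω
    refine tsum_congr fun k => ?_
    have hSk : RenewalAux.S ξ k ω = ∑ i ∈ Finset.range k, ξ i ω := rfl
    simp only [hG]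
    by_cases hkt : (∑ i ∈ Finset.range k, ξ i ω) ≤ t
    · rw [if_pos hkt, if_pos (by rw [hSk]; exact hkt)]
      have hSpos : 0 ≤ ∑ i ∈ Finset.range k, ξ i ω :=
        Finset.sum_nonneg fun i _ => (hω i).le
      have hmax : max (t - RenewalAux.S ξ k ω) 0 = t - ∑ i ∈ Finset.range k, ξ i ω := by
        rw [hSk, max_eq_left]; linarith
      rw [hmax]
    · rw [if_neg hkt, if_neg (by rw [hSk]; exact hkt)]
  rw [hcongr,
    lintegral_tsum (f := fun k ω => G (RenewalAux.S ξ k ω))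
      (fun k => (hGmeas.comp (RenewalAux.measurable_S hmeas k)).aemeasurable)]
  set n := Nat.floor t with hn_def
  set c : ℕ → ℝ≥0∞ := fun j => ENNReal.ofReal (f₁ (j:ℝ) - f₂ ((j:ℝ)+1)) with hc
  have hptw : ∀ k : ℕ, (∫⁻ ω, G (RenewalAux.S ξ k ω) ∂P)
      ≤ ∑ j ∈ Finset.range (n+1), c j *
        P {ω | t - (j:ℝ) - 1 < RenewalAux.S ξ k ω ∧ RenewalAux.S ξ k ω ≤ t - (j:ℝ)} := by
    intro k
    set D : ℕ → Set Ω := fun j =>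
      {ω | t - (j:ℝ) - 1 < RenewalAux.S ξ k ω ∧ RenewalAux.S ξ k ω ≤ t - (j:ℝ)} with hD
    have hDmeas : ∀ j, MeasurableSet (D j) := by
      intro j
      exact (measurableSet_lt measurable_const (RenewalAux.measurable_S hmeas k)).inter
        (measurableSet_le (RenewalAux.measurable_S hmeas k) measurable_const)
    have hbd : ∀ᵐ ω ∂P, G (RenewalAux.S ξ k ω)
        ≤ ∑ j ∈ Finset.range (n+1), Set.indicator (D j) (fun _ => c j) ω := by
      filter_upwards [hΩ₀] with ω hω
      have hs0 : 0 ≤ RenewalAux.S ξ k ω := Finset.sum_nonneg fun i _ => (hω i).le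
      by_cases hst : RenewalAux.S ξ k ω ≤ t
      · have hts : 0 ≤ t - RenewalAux.S ξ k ω := by linarith
        set j₀ := Nat.floor (t - RenewalAux.S ξ k ω) with hj₀
        have hj₀le : (j₀:ℝ) ≤ t - RenewalAux.S ξ k ω := Nat.floor_le hts
        have hj₀lt : t - RenewalAux.S ξ k ω < (j₀:ℝ) + 1 := Nat.lt_floor_add_one _
        have hj₀n : j₀ ∈ Finset.range (n+1) := by
          rw [Finset.mem_range]
          have h5 : j₀ ≤ n := Nat.floor_le_floor (by linarith)
          omega
        have hmem : ω ∈ D j₀ := by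
          simp only [hD, Set.mem_setOf_eq]
          constructor <;> linarith
        have hval : G (RenewalAux.S ξ k ω) ≤ c j₀ := by
          simp only [hG]
          rw [if_pos hst]
          have hmax : max (t - RenewalAux.S ξ k ω) 0 = t - RenewalAux.S ξ k ω :=
            max_eq_left hts
          rw [hmax, hc]
          apply ENNReal.ofReal_le_ofReal
          have e1 : f₁ (t - RenewalAux.S ξ k ω) ≤ f₁ (j₀:ℝ) :=
            h₁ (Set.mem_Ici.mpr (Nat.cast_nonneg _)) (Set.mem_Ici.mpr hts) hj₀le
          have e2 : f₂ ((j₀:ℝ)+1) ≤ f₂ (t - RenewalAux.S ξ k ω) :=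
            h₂ (Set.mem_Ici.mpr hts) (Set.mem_Ici.mpr (by positivity)) (by linarith)
          linarith
        calc G (RenewalAux.S ξ k ω) ≤ c j₀ := hval
        _ = Set.indicator (D j₀) (fun _ => c j₀) ω :=
          (Set.indicator_of_mem hmem (fun _ => c j₀)).symm
        _ ≤ ∑ j ∈ Finset.range (n+1), Set.indicator (D j) (fun _ => c j) ω :=
          Finset.single_le_sum (f := fun j => Set.indicator (D j) (fun _ => c j) ω)
            (fun j _ => zero_le) hj₀n
      · simp only [hG]
        rw [if_neg hst]
        exact zero_le
    calc (∫⁻ ω, G (RenewalAux.S ξ k ω) ∂P)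
        ≤ ∫⁻ ω, ∑ j ∈ Finset.range (n+1), Set.indicator (D j) (fun _ => c j) ω ∂P :=
          lintegral_mono_ae hbd
    _ = ∑ j ∈ Finset.range (n+1), ∫⁻ ω, Set.indicator (D j) (fun _ => c j) ω ∂P :=
          lintegral_finset_sum _ (fun j _ => (measurable_const.indicator (hDmeas j)))
    _ = ∑ j ∈ Finset.range (n+1), c j * P (D j) :=
          Finset.sum_congr rfl fun j _ => lintegral_indicator_const (hDmeas j) (c j)
  have hsum : (∑' k : ℕ, ∫⁻ ω, G (RenewalAux.S ξ k ω) ∂P)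
      ≤ K * ∑ j ∈ Finset.range (n+1), c j := by
    calc (∑' k : ℕ, ∫⁻ ω, G (RenewalAux.S ξ k ω) ∂P)
        ≤ ∑' k : ℕ, ∑ j ∈ Finset.range (n+1), c j *
            P {ω | t - (j:ℝ) - 1 < RenewalAux.S ξ k ω ∧ RenewalAux.S ξ k ω ≤ t - (j:ℝ)} :=
          ENNReal.tsum_le_tsum hptw
    _ = ∑ j ∈ Finset.range (n+1), ∑' k : ℕ, c j *
            P {ω | t - (j:ℝ) - 1 < RenewalAux.S ξ k ω ∧ RenewalAux.S ξ k ω ≤ t - (j:ℝ)} :=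
          Summable.tsum_finsetSum (fun j _ => ENNReal.summable)
    _ = ∑ j ∈ Finset.range (n+1), c j * ∑' k : ℕ,
            P {ω | t - (j:ℝ) - 1 < RenewalAux.S ξ k ω ∧ RenewalAux.S ξ k ω ≤ t - (j:ℝ)} :=
          Finset.sum_congr rfl fun j _ => ENNReal.tsum_mul_left
    _ ≤ ∑ j ∈ Finset.range (n+1), c j * K := by
          refine Finset.sum_le_sum fun j _ => mul_le_mul_right ?_ _
          have h6 := hK (t - (j:ℝ) - 1)
          have hb1 : t - (j:ℝ) - 1 + 1 = t - (j:ℝ) := by ring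
          rw [hb1] at h6
          exact h6
    _ = K * ∑ j ∈ Finset.range (n+1), c j := by
          rw [← Finset.sum_mul, mul_comm]
  have hreal : (∑ j ∈ Finset.range (n+1), c j)
      ≤ ENNReal.ofReal (2*M + ∫ y in (0:ℝ)..t, (f₁ y - f₂ y)) := by
    have hnn : ∀ j ∈ Finset.range (n+1), 0 ≤ f₁ (j:ℝ) - f₂ ((j:ℝ)+1) := by
      intro j _
      have e1 : f₂ ((j:ℝ)+1) ≤ f₁ ((j:ℝ)+1) := hle _ (by positivity)
      have e2 : f₁ ((j:ℝ)+1) ≤ f₁ (j:ℝ) :=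
        h₁ (Set.mem_Ici.mpr (Nat.cast_nonneg _)) (Set.mem_Ici.mpr (by positivity))
          (by linarith)
      linarith
    have h1 : (∑ j ∈ Finset.range (n+1), c j)
        = ENNReal.ofReal (∑ j ∈ Finset.range (n+1), (f₁ (j:ℝ) - f₂ ((j:ℝ)+1))) := by
      rw [ENNReal.ofReal_sum_of_nonneg hnn]
    rw [h1]
    exact ENNReal.ofReal_le_ofReal
      (RenewalAux.det_sum_bound f₁ f₂ M hM h₁ h₂ hle h₂pos t ht0)
  have hI : c₀ ≤ ∫ y in (0:ℝ)..t, (f₁ y - f₂ y) := by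
    have hadd := intervalIntegral.integral_add_adjacent_intervals
      (f := fun y => f₁ y - f₂ y) (μ := MeasureTheory.volume) (a := 0) (b := t₀) (c := t)
      ((RenewalAux.integrable_antitoneOn f₁ h₁ _ _ le_rfl ht₀.le).sub
        (RenewalAux.integrable_antitoneOn f₂ h₂ _ _ le_rfl ht₀.le))
      ((RenewalAux.integrable_antitoneOn f₁ h₁ _ _ ht₀.le ht0).sub
        (RenewalAux.integrable_antitoneOn f₂ h₂ _ _ ht₀.le ht0))
    have hpo : 0 ≤ ∫ y in t₀..t, (f₁ y - f₂ y) :=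
      intervalIntegral.integral_nonneg ht
        (fun u hu => sub_nonneg.mpr (hle u (le_trans ht₀.le hu.1)))
    rw [hc₀]
    linarith
  have hfinal : ENNReal.ofReal (2*M + ∫ y in (0:ℝ)..t, (f₁ y - f₂ y))
      ≤ ENNReal.ofReal (2*M/c₀ + 1) * ENNReal.ofReal (∫ y in (0:ℝ)..t, (f₁ y - f₂ y)) := by
    rw [← ENNReal.ofReal_mul (by positivity)]
    apply ENNReal.ofReal_le_ofReal
    have h2 : 2*M ≤ (2*M/c₀) * (∫ y in (0:ℝ)..t, (f₁ y - f₂ y)) := by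
      rw [div_mul_eq_mul_div, le_div_iff₀ hc₀pos]
      nlinarith
    nlinarith
  calc (∑' k : ℕ, ∫⁻ ω, G (RenewalAux.S ξ k ω) ∂P)
      ≤ K * ∑ j ∈ Finset.range (n+1), c j := hsum
  _ ≤ K * ENNReal.ofReal (2*M + ∫ y in (0:ℝ)..t, (f₁ y - f₂ y)) :=
      mul_le_mul_right hreal K
  _ ≤ K * (ENNReal.ofReal (2*M/c₀ + 1) * ENNReal.ofReal (∫ y in (0:ℝ)..t, (f₁ y - f₂ y))) :=
      mul_le_mul_right hfinal K
  _ = K * ENNReal.ofReal (2*M/c₀ + 1) * ENNReal.ofReal (∫ y in (0:ℝ)..t, (f₁ y - f₂ y)) :=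
      (mul_assoc _ _ _).symm
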